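/- The N-step distribution of the urn model started at ē satisfies ν_N(ḡ) = r^{-n} ∑_{k ∈ X(s,n)} d_k f(k)^N Ω_k(g), where d_k = d_0^{k_0}⋯d_{s-1}^{k_{s-1}}·(n choose k_0,...,k_{s-1}) is the dimension of the irreducible representation associated to Ω_k, r = |K|/|L|, and f(k) is the Fourier coefficient of the step distribution. -/

import Mathlib

open scoped BigOperators

attribute [local instance] Classical.propDecidable

noncomputable def avgIdem (K : Type) [Group K] [Fintype K] (L : Subgroup K) :
    MonoidAlgebra ℂ K :=
  (Fintype.card L : ℂ)⁻¹ • ∑ h : L, MonoidAlgebra.of ℂ K (h : K)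

/-- `(K, L)` is a Gelfand pair: the Hecke algebra `e_L ℂK e_L` is commutative. -/
def IsGelfandPair (K : Type) [Group K] [Fintype K] (L : Subgroup K) : Prop :=
  ∀ x y : MonoidAlgebra ℂ K,
    (avgIdem K L * x * avgIdem K L) * (avgIdem K L * y * avgIdem K L) =
      (avgIdem K L * y * avgIdem K L) * (avgIdem K L * x * avgIdem K L)

/-- `ω` is a zonal spherical function of the pair `(K, L)`:
normalized, bi-`L`-invariant, and satisfying the spherical functional equation. -/
def IsZSF (K : Type) [Group K] [Fintype K] (L : Subgroup K) (ω : K → ℂ) : Prop :=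
  ω 1 = 1 ∧
    (∀ g : K, ∀ h ∈ L, ∀ h' ∈ L, ω (h * g * h') = ω g) ∧
    ∀ x y : K, (Fintype.card L : ℂ)⁻¹ * ∑ h : L, ω (x * (h : K) * y) = ω x * ω y

/-- the double coset `L x₀ L` as a set -/
def dcoset (K : Type) [Group K] (L : Subgroup K) (x₀ : K) : Set K :=
  {g : K | ∃ a ∈ L, ∃ b ∈ L, g = a * x₀ * b}

/-- one-step transition probability of the interacting urn model on `(K ⧸ L)^n` -/
noncomputable def step (K : Type) [Group K] [Fintype K] (L : Subgroup K) (x₀ : K)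
    (n m : ℕ) (p : ℝ) (x y : Fin n → K ⧸ L) : ℝ :=
  if x = y then 1 - m * p
  else if ∃ j : Fin n, (∀ i : Fin n, i ≠ j → x i = y i) ∧
      (x j).out⁻¹ * (y j).out ∈ dcoset K L x₀ then p / n
  else 0

/-- the transition matrix `P_{(K,L;n)}` (real version) -/
noncomputable def PmatR (K : Type) [Group K] [Fintype K] (L : Subgroup K) (x₀ : K)
    (n m : ℕ) (p : ℝ) : Matrix (Fin n → K ⧸ L) (Fin n → K ⧸ L) ℝ :=
  Matrix.of fun x y => step K L x₀ n m p x y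

/-- the transition matrix `P_{(K,L;n)}` (complex version) -/
noncomputable def PmatC (K : Type) [Group K] [Fintype K] (L : Subgroup K) (x₀ : K)
    (n m : ℕ) (p : ℝ) : Matrix (Fin n → K ⧸ L) (Fin n → K ⧸ L) ℂ :=
  Matrix.of fun x y => (step K L x₀ n m p x y : ℂ)

/-- the initial state `ē = (L, …, L)` -/
def eQ (K : Type) [Group K] (L : Subgroup K) (n : ℕ) : Fin n → K ⧸ L :=
  fun _ => ((1 : K) : K ⧸ L)

/-- permutation action of `S_n` on `K^n` by automorphisms -/
def permAut (n : ℕ) (K : Type) [Group K] : Equiv.Perm (Fin n) →* MulAut (Fin n → K) where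
  toFun σ :=
    { Equiv.arrowCongr σ (Equiv.refl K) with
      map_mul' := fun f g => rfl }
  map_one' := by ext f i; rfl
  map_mul' := by intro σ τ; ext f i; rfl

/-- the wreath product `K ≀ S_n` -/
abbrev Wreath (n : ℕ) (K : Type) [Group K] : Type :=
  SemidirectProduct (Fin n → K) (Equiv.Perm (Fin n)) (permAut n K)

noncomputable instance (n : ℕ) (K : Type) [Group K] [Fintype K] : Fintype (Wreath n K) :=
  Fintype.ofEquiv ((Fin n → K) × Equiv.Perm (Fin n))
    { toFun := fun p => ⟨p.1, p.2⟩
      invFun := fun w => (w.left, w.right)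
      left_inv := fun _ => rfl
      right_inv := fun _ => rfl }

/-- the subgroup `L ≀ S_n` of `K ≀ S_n` -/
def wreathSubgroup (n : ℕ) (K : Type) [Group K] (L : Subgroup K) : Subgroup (Wreath n K) where
  carrier := {w : Wreath n K | ∀ i : Fin n, w.left i ∈ L}
  one_mem' := by
    intro i
    simp only [SemidirectProduct.one_left, Pi.one_apply]
    exact L.one_mem
  mul_mem' := by
    intro a b ha hb i
    rw [SemidirectProduct.mul_left]
    exact L.mul_mem (ha i) (hb _)
  inv_mem' := by
    intro a ha i
    rw [SemidirectProduct.inv_left]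
    exact L.inv_mem (ha _)


/-- The generating identity defining the multivariate Krawtchouk polynomials `Ω_k`:
`∏_{i=1}^n (∑_j ω_j(x_i) t_j) = ∑_{k ∈ X(s,n)} (n choose k) Ω_k(x) t^k`,
stated coefficientwise. -/
def GenId (K : Type) [Group K] (s n : ℕ) (ω : Fin s → K → ℂ)
    (Ω : (Fin s → ℕ) → (Fin n → K) → ℂ) : Prop :=
  ∀ (x : Fin n → K) (k : Fin s → ℕ), (∑ i, k i = n) →
    MvPolynomial.coeff (Finsupp.equivFunOnFinite.symm k)
        (∏ i : Fin n, ∑ j : Fin s, MvPolynomial.C (ω j (x i)) * MvPolynomial.X j) =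
      (Nat.multinomial Finset.univ k : ℂ) * Ω k x


section ZSFGen
variable {G : Type} [Group G] [Fintype G] {H : Subgroup G}

lemma cardH_ne (H : Subgroup G) : ((Fintype.card H : ℂ)) ≠ 0 := by
  exact_mod_cast Nat.cast_ne_zero.mpr Fintype.card_ne_zero

lemma avg_const (H : Subgroup G) (c : ℂ) :
    (Fintype.card H : ℂ)⁻¹ * ∑ _h : H, c = c := by
  rw [Finset.sum_const, Finset.card_univ, nsmul_eq_mul, ← mul_assoc,
    inv_mul_cancel₀ (cardH_ne H), one_mul]

lemma zsf_left_inv {φ : G → ℂ} (hφ : IsZSF G H φ) (g : G) {h : G} (hh : h ∈ H) :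
    φ (h * g) = φ g := by
  simpa using hφ.2.1 g h hh 1 H.one_mem

lemma zsf_right_inv {φ : G → ℂ} (hφ : IsZSF G H φ) (g : G) {h : G} (hh : h ∈ H) :
    φ (g * h) = φ g := by
  simpa using hφ.2.1 g 1 H.one_mem h hh

lemma zsf_key {φ ψ : G → ℂ} (hφ : IsZSF G H φ) (hψ : IsZSF G H ψ) (x : G) :
    (∑ g : G, φ g * ψ g⁻¹) * ψ x = φ x * (∑ g : G, φ g * ψ g⁻¹) := by
  have h1 : ∀ h : H, ∑ g : G, φ g * ψ (g⁻¹ * x) = ∑ g : G, φ g * ψ (g⁻¹ * (h : G) * x) := by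
    intro h
    rw [← Equiv.sum_comp (Equiv.mulLeft ((h : G))) (fun g => φ g * ψ (g⁻¹ * (h : G) * x))]
    refine Finset.sum_congr rfl fun g _ => ?_
    simp only [Equiv.coe_mulLeft]
    rw [zsf_left_inv hφ g h.2]
    congr 2
    group
  have h2 : ∀ h : H, ∑ g : G, φ g * ψ (g⁻¹ * x) = ∑ g : G, φ (x * (h : G) * g) * ψ g⁻¹ := by
    intro h
    rw [← Equiv.sum_comp (Equiv.mulLeft (((h:G))⁻¹ * x⁻¹)) (fun g => φ (x * (h : G) * g) * ψ g⁻¹)]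
    refine Finset.sum_congr rfl fun g _ => ?_
    simp only [Equiv.coe_mulLeft]
    have e1 : x * (h : G) * ((h : G)⁻¹ * x⁻¹ * g) = g := by group
    rw [e1]
    congr 1
    rw [show ((h : G)⁻¹ * x⁻¹ * g)⁻¹ = g⁻¹ * x * (h : G) by group]
    rw [zsf_right_inv hψ _ h.2]
  have hA : ∑ g : G, φ g * ψ (g⁻¹ * x) = (∑ g : G, φ g * ψ g⁻¹) * ψ x := by
    calc ∑ g : G, φ g * ψ (g⁻¹ * x)
        = (Fintype.card H : ℂ)⁻¹ * ∑ _h : H, ∑ g : G, φ g * ψ (g⁻¹ * x) :=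
          (avg_const H _).symm
      _ = (Fintype.card H : ℂ)⁻¹ * ∑ h : H, ∑ g : G, φ g * ψ (g⁻¹ * (h : G) * x) := by
          congr 1
          exact Finset.sum_congr rfl fun h _ => h1 h
      _ = ∑ g : G, φ g * ((Fintype.card H : ℂ)⁻¹ * ∑ h : H, ψ (g⁻¹ * (h : G) * x)) := by
          rw [Finset.sum_comm, Finset.mul_sum]
          refine Finset.sum_congr rfl fun g _ => ?_
          simp only [Finset.mul_sum]
          exact Finset.sum_congr rfl fun h _ => by ring
      _ = ∑ g : G, φ g * (ψ g⁻¹ * ψ x) :=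
          Finset.sum_congr rfl fun g _ => by rw [hψ.2.2 g⁻¹ x]
      _ = (∑ g : G, φ g * ψ g⁻¹) * ψ x := by
          rw [Finset.sum_mul]
          exact Finset.sum_congr rfl fun g _ => by ring
  have hB : ∑ g : G, φ g * ψ (g⁻¹ * x) = φ x * (∑ g : G, φ g * ψ g⁻¹) := by
    calc ∑ g : G, φ g * ψ (g⁻¹ * x)
        = (Fintype.card H : ℂ)⁻¹ * ∑ _h : H, ∑ g : G, φ g * ψ (g⁻¹ * x) :=
          (avg_const H _).symm
      _ = (Fintype.card H : ℂ)⁻¹ * ∑ h : H, ∑ g : G, φ (x * (h : G) * g) * ψ g⁻¹ := by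
          congr 1
          exact Finset.sum_congr rfl fun h _ => h2 h
      _ = ∑ g : G, ((Fintype.card H : ℂ)⁻¹ * ∑ h : H, φ (x * (h : G) * g)) * ψ g⁻¹ := by
          rw [Finset.sum_comm, Finset.mul_sum]
          refine Finset.sum_congr rfl fun g _ => ?_
          simp only [Finset.mul_sum, Finset.sum_mul]
          exact Finset.sum_congr rfl fun h _ => by ring
      _ = ∑ g : G, (φ x * φ g) * ψ g⁻¹ :=
          Finset.sum_congr rfl fun g _ => by rw [hφ.2.2 x g]
      _ = φ x * (∑ g : G, φ g * ψ g⁻¹) := by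
          rw [Finset.mul_sum]
          exact Finset.sum_congr rfl fun g _ => by ring
  rw [← hA, hB]

lemma zsf_conj {φ : G → ℂ} (hφ : IsZSF G H φ) :
    IsZSF G H (fun g => (starRingEnd ℂ) (φ g)) := by
  obtain ⟨h1, h2, h3⟩ := hφ
  refine ⟨by simp [h1], fun g h hh h' hh' => by simp [h2 g h hh h' hh'], fun x y => ?_⟩
  have := congrArg (starRingEnd ℂ) (h3 x y)
  simpa [map_mul, map_sum, map_inv₀] using this

lemma zsf_inv {φ : G → ℂ} (hφ : IsZSF G H φ) :
    IsZSF G H (fun g => φ g⁻¹) := by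
  obtain ⟨h1, h2, h3⟩ := hφ
  refine ⟨by simp [h1], ?_, ?_⟩
  · intro g h hh h' hh'
    simp only [mul_inv_rev]
    have := h2 g⁻¹ h'⁻¹ (H.inv_mem hh') h⁻¹ (H.inv_mem hh)
    simpa [mul_assoc] using this
  · intro x y
    simp only []
    calc (Fintype.card H : ℂ)⁻¹ * ∑ h : H, φ ((x * (h : G) * y)⁻¹)
        = (Fintype.card H : ℂ)⁻¹ * ∑ h : H, φ (y⁻¹ * (h : G) * x⁻¹) := by
          congr 1
          rw [← Equiv.sum_comp (Equiv.inv H) (fun h : H => φ (y⁻¹ * ((h : H) : G) * x⁻¹))]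
          refine Finset.sum_congr rfl fun h _ => ?_
          simp only [Equiv.inv_apply]
          rw [show (((h⁻¹ : H) : G)) = ((h : G))⁻¹ by simp]
          congr 1
          group
      _ = φ y⁻¹ * φ x⁻¹ := h3 _ _
      _ = φ x⁻¹ * φ y⁻¹ := mul_comm _ _

lemma zsf_unitary {φ : G → ℂ} (hφ : IsZSF G H φ) (x : G) :
    (starRingEnd ℂ) (φ x⁻¹) = φ x := by
  set ψ : G → ℂ := fun g => (starRingEnd ℂ) (φ g⁻¹) with hψdef
  have hψ : IsZSF G H ψ := zsf_conj (zsf_inv hφ)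
  have hSpos : (∑ g : G, φ g * ψ g⁻¹) ≠ 0 := by
    have he : ∀ g : G, φ g * ψ g⁻¹ = (Complex.normSq (φ g) : ℂ) := by
      intro g
      simp [hψdef, Complex.mul_conj]
    rw [Finset.sum_congr rfl fun g _ => he g, ← Complex.ofReal_sum]
    rw [Complex.ofReal_ne_zero]
    have hle : Complex.normSq (φ 1) ≤ ∑ g : G, Complex.normSq (φ g) :=
      Finset.single_le_sum (fun g _ => Complex.normSq_nonneg _) (Finset.mem_univ 1)
    rw [hφ.1] at hle
    simp only [Complex.normSq_one] at hle
    positivity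
  have hk := zsf_key hφ hψ x
  rw [mul_comm (φ x)] at hk
  have h2 : ψ x = φ x := mul_left_cancel₀ hSpos hk
  simpa [hψdef] using h2

lemma zsf_orth {φ ψ : G → ℂ} (hφ : IsZSF G H φ) (hψ : IsZSF G H ψ) (hne : φ ≠ ψ) :
    ∑ g : G, φ g * ψ g⁻¹ = 0 := by
  by_contra hS
  apply hne
  funext x
  have hk := zsf_key hφ hψ x
  rw [mul_comm (φ x)] at hk
  exact (mul_left_cancel₀ hS hk).symm

end ZSFGen

section Base
variable {K : Type} [Group K] [Fintype K] {L : Subgroup K}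

lemma zsf_on_subgroup {φ : K → ℂ} (hφ : IsZSF K L φ) {h : K} (hh : h ∈ L) : φ h = 1 := by
  have := zsf_right_inv hφ 1 hh
  rw [one_mul] at this
  rw [this, hφ.1]

lemma zsf_norm_ne {φ : K → ℂ} (hφ : IsZSF K L φ) :
    (∑ g : K, φ g * (starRingEnd ℂ) (φ g)) ≠ 0 := by
  have he : ∀ g : K, φ g * (starRingEnd ℂ) (φ g) = (Complex.normSq (φ g) : ℂ) := by
    intro g; simp [Complex.mul_conj]
  rw [Finset.sum_congr rfl fun g _ => he g, ← Complex.ofReal_sum, Complex.ofReal_ne_zero]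
  have hle : Complex.normSq (φ 1) ≤ ∑ g : K, Complex.normSq (φ g) :=
    Finset.single_le_sum (fun g _ => Complex.normSq_nonneg _) (Finset.mem_univ 1)
  rw [hφ.1] at hle
  simp only [Complex.normSq_one] at hle
  positivity

lemma zsf_B_self {φ : K → ℂ} (hφ : IsZSF K L φ) :
    ∑ g : K, φ g * φ g⁻¹ = ∑ g : K, φ g * (starRingEnd ℂ) (φ g) := by
  refine Finset.sum_congr rfl fun g _ => ?_
  rw [← zsf_unitary hφ g⁻¹, inv_inv]

lemma base_complete (s : ℕ) [NeZero s] (ω : Fin s → K → ℂ)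
    (hzsf : ∀ i, IsZSF K L (ω i)) (hinj : Function.Injective ω)
    (hcomplete : s = Nat.card (DoubleCoset.Quotient (L : Set K) (L : Set K)))
    (d : Fin s → ℕ)
    (hd : ∀ i, (Fintype.card K : ℂ)⁻¹ *
      ∑ g : K, ω i g * (starRingEnd ℂ) (ω i g) = ((d i : ℂ))⁻¹)
    (r : ℕ) (hr : r * Nat.card L = Nat.card K) (y : K) :
    ∑ j, (d j : ℂ) * ω j y = (r : ℂ) * (if y ∈ L then 1 else 0) := by
  classical
  have hcardK : ((Fintype.card K : ℂ)) ≠ 0 := by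
    exact_mod_cast Nat.cast_ne_zero.mpr Fintype.card_ne_zero
  -- pairing values
  have hT : ∀ i, ∑ g : K, ω i g * ω i g⁻¹ = (Fintype.card K : ℂ) * ((d i : ℂ))⁻¹ := by
    intro i
    rw [zsf_B_self (hzsf i)]
    rw [← hd i, ← mul_assoc, mul_inv_cancel₀ hcardK, one_mul]
  have hTne : ∀ i, (∑ g : K, ω i g * ω i g⁻¹) ≠ 0 := by
    intro i
    rw [zsf_B_self (hzsf i)]
    exact zsf_norm_ne (hzsf i)
  have horth : ∀ i j, i ≠ j → ∑ g : K, ω i g * ω j g⁻¹ = 0 := by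
    intro i j hij
    exact zsf_orth (hzsf i) (hzsf j) (fun h => hij (hinj h))
  -- the pairing of a combination
  have hpair : ∀ (c : Fin s → ℂ) (i : Fin s),
      ∑ g : K, (∑ j, c j * ω j g) * ω i g⁻¹ = c i * ∑ g : K, ω i g * ω i g⁻¹ := by
    intro c i
    calc ∑ g : K, (∑ j, c j * ω j g) * ω i g⁻¹
        = ∑ j, c j * ∑ g : K, ω j g * ω i g⁻¹ := by
          simp only [Finset.sum_mul]
          rw [Finset.sum_comm]
          refine Finset.sum_congr rfl fun j _ => ?_
          simp only [Finset.mul_sum]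
          exact Finset.sum_congr rfl fun g _ => by ring
      _ = c i * ∑ g : K, ω i g * ω i g⁻¹ := by
          refine Finset.sum_eq_single i (fun j _ hj => ?_) (fun h => absurd (Finset.mem_univ i) h)
          rw [horth j i hj, mul_zero]
  -- double coset quotient
  haveI hfinQ : Finite (DoubleCoset.Quotient (L : Set K) (L : Set K)) := Quotient.finite _
  haveI : Fintype (DoubleCoset.Quotient (L : Set K) (L : Set K)) := Fintype.ofFinite _
  -- descend the spherical functions
  have hwd : ∀ (f : K → ℂ), (∀ g : K, ∀ h ∈ L, ∀ h' ∈ L, f (h * g * h') = f g) →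
      ∀ a b : K, (DoubleCoset.setoid (L : Set K) (L : Set K)) a b → f a = f b := by
    intro f hf a b hab
    obtain ⟨h, hh, k, hk, hb⟩ := DoubleCoset.rel_iff.mp hab
    rw [hb, hf a h hh k hk]
  set ωq : Fin s → DoubleCoset.Quotient (L : Set K) (L : Set K) → ℂ :=
    fun j => Quotient.lift (ω j) (hwd (ω j) (hzsf j).2.1) with hωq
  have hωq_mk : ∀ j a, ωq j (DoubleCoset.mk L L a) = ω j a := fun j a => rfl
  have hsurj : Function.Surjective (DoubleCoset.mk L L : K → DoubleCoset.Quotient (L : Set K) (L : Set K)) :=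
    fun q => ⟨q.out, DoubleCoset.out_eq' L L q⟩
  -- linear independence
  have hli : LinearIndependent ℂ ωq := by
    rw [Fintype.linearIndependent_iff]
    intro c hc i
    have hzero : ∀ g : K, (∑ j, c j * ω j g) = 0 := by
      intro g
      have := congrFun hc (DoubleCoset.mk L L g)
      simpa [hωq_mk] using this
    have h0 : ∑ g : K, (∑ j, c j * ω j g) * ω i g⁻¹ = 0 := by
      simp [fun g => hzero g]
    rw [hpair c i] at h0
    exact (mul_eq_zero.mp h0).resolve_right (hTne i)
  -- spanning
  haveI : Nonempty (Fin s) := Fin.pos_iff_nonempty.mp (Nat.pos_of_ne_zero (NeZero.ne s))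
  have hcard : Fintype.card (Fin s) =
      Module.finrank ℂ (DoubleCoset.Quotient (L : Set K) (L : Set K) → ℂ) := by
    rw [Module.finrank_fintype_fun_eq_card, Fintype.card_fin, hcomplete, Nat.card_eq_fintype_card]
  have hspan := hli.span_eq_top_of_card_eq_finrank hcard
  -- the indicator function descends
  set χ : DoubleCoset.Quotient (L : Set K) (L : Set K) → ℂ :=
    Quotient.lift (fun y : K => if y ∈ L then (1 : ℂ) else 0)
      (hwd _ (by
        intro g h hh h' hh'
        by_cases hg : g ∈ L
        · rw [if_pos hg, if_pos (L.mul_mem (L.mul_mem hh hg) hh')]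
        · rw [if_neg hg, if_neg (fun hmem : h * g * h' ∈ L => hg (by
            have : h⁻¹ * (h * g * h') * h'⁻¹ ∈ L :=
              L.mul_mem (L.mul_mem (L.inv_mem hh) hmem) (L.inv_mem hh')
            simpa [mul_assoc] using this))])) with hχ
  have hχmem : χ ∈ Submodule.span ℂ (Set.range ωq) := hspan ▸ Submodule.mem_top
  obtain ⟨c, hc⟩ := (Submodule.mem_span_range_iff_exists_fun ℂ).mp hχmem
  have hrep : ∀ g : K, ∑ j, c j * ω j g = if g ∈ L then (1 : ℂ) else 0 := by
    intro g
    have h := congrFun hc (DoubleCoset.mk L L g)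
    have hχg : χ (DoubleCoset.mk L L g) = if g ∈ L then (1 : ℂ) else 0 := rfl
    rw [hχg] at h
    simpa [hωq_mk, smul_eq_mul] using h
  have hdne : ∀ i, (d i : ℂ) ≠ 0 := by
    intro i hzero
    have h := hd i
    rw [hzero] at h
    simp only [inv_zero] at h
    exact (mul_ne_zero (inv_ne_zero hcardK) (zsf_norm_ne (hzsf i))) h
  have hrc : (r : ℂ) * (Fintype.card L : ℂ) = (Fintype.card K : ℂ) := by
    rw [Nat.card_eq_fintype_card, Nat.card_eq_fintype_card] at hr
    exact_mod_cast congrArg (Nat.cast : ℕ → ℂ) hr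
  have hLcard : ∀ i, ∑ g : K, (if g ∈ L then (1 : ℂ) else 0) * ω i g⁻¹
      = (Fintype.card L : ℂ) := by
    intro i
    have h1 : ∀ g : K, (if g ∈ L then (1 : ℂ) else 0) * ω i g⁻¹
        = if g ∈ L then (1 : ℂ) else 0 := by
      intro g
      by_cases hg : g ∈ L
      · simp [hg, zsf_on_subgroup (hzsf i) (L.inv_mem hg)]
      · simp [hg]
    rw [Finset.sum_congr rfl fun g _ => h1 g, Finset.sum_boole, Fintype.card_subtype]
  have key : ∀ j, (r : ℂ) * c j = (d j : ℂ) := by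
    intro j
    have h2 : (Fintype.card L : ℂ) = c j * ((Fintype.card K : ℂ) * ((d j : ℂ))⁻¹) := by
      calc (Fintype.card L : ℂ)
          = ∑ g : K, (if g ∈ L then (1 : ℂ) else 0) * ω j g⁻¹ := (hLcard j).symm
        _ = ∑ g : K, (∑ j', c j' * ω j' g) * ω j g⁻¹ :=
            Finset.sum_congr rfl fun g _ => by rw [hrep g]
        _ = c j * ∑ g : K, ω j g * ω j g⁻¹ := hpair c j
        _ = c j * ((Fintype.card K : ℂ) * ((d j : ℂ))⁻¹) := by rw [hT j]
    have h2' : (Fintype.card L : ℂ) * (d j : ℂ) = c j * (Fintype.card K : ℂ) := by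
      field_simp [hdne j] at h2
      linear_combination h2
    have h4 : (Fintype.card K : ℂ) * ((r : ℂ) * c j) = (Fintype.card K : ℂ) * (d j : ℂ) := by
      linear_combination (-(r : ℂ)) * h2' + (d j : ℂ) * hrc
    exact mul_left_cancel₀ hcardK h4
  calc ∑ j, (d j : ℂ) * ω j y
      = ∑ j, ((r : ℂ) * c j) * ω j y :=
        Finset.sum_congr rfl fun j _ => by rw [key j]
    _ = (r : ℂ) * ∑ j, c j * ω j y := by
        rw [Finset.mul_sum]
        exact Finset.sum_congr rfl fun j _ => by ring
    _ = (r : ℂ) * (if y ∈ L then 1 else 0) := by rw [hrep y]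
end Base

section Delta
variable {K : Type} [Group K] [Fintype K] {L : Subgroup K}

lemma wreath_delta (s : ℕ) [NeZero s] (ω : Fin s → K → ℂ)
    (hzsf : ∀ i, IsZSF K L (ω i)) (hinj : Function.Injective ω)
    (hcomplete : s = Nat.card (DoubleCoset.Quotient (L : Set K) (L : Set K)))
    (d : Fin s → ℕ)
    (hd : ∀ i, (Fintype.card K : ℂ)⁻¹ *
      ∑ g : K, ω i g * (starRingEnd ℂ) (ω i g) = ((d i : ℂ))⁻¹)
    (r : ℕ) (hr : r * Nat.card L = Nat.card K)
    (n : ℕ) (Ω : (Fin s → ℕ) → (Fin n → K) → ℂ) (hGen : GenId K s n ω Ω)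
    (x : Fin n → K) :
    ∑ k ∈ Finset.Nat.antidiagonalTuple s n,
        ((∏ i : Fin s, (d i : ℂ) ^ k i) * (Nat.multinomial Finset.univ k : ℂ)) * Ω k x =
      if (∀ i, x i ∈ L) then ((r : ℂ)) ^ n else 0 := by
  classical
  set P : MvPolynomial (Fin s) ℂ :=
    ∏ i : Fin n, ∑ j : Fin s, MvPolynomial.C (ω j (x i)) * MvPolynomial.X j with hP
  have hhom : P.IsHomogeneous n := by
    have h1 : ∀ i : Fin n, (∑ j : Fin s, MvPolynomial.C (ω j (x i)) *
        MvPolynomial.X j).IsHomogeneous 1 :=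
      fun i => MvPolynomial.IsHomogeneous.sum Finset.univ _ 1
        (fun j _ => MvPolynomial.isHomogeneous_C_mul_X _ _)
    have := MvPolynomial.IsHomogeneous.prod Finset.univ
      (fun i : Fin n => ∑ j : Fin s, MvPolynomial.C (ω j (x i)) * MvPolynomial.X j)
      (fun _ => 1) (fun i _ => h1 i)
    simpa using this
  have heval : MvPolynomial.eval (fun j => (d j : ℂ)) P =
      if (∀ i, x i ∈ L) then ((r : ℂ)) ^ n else 0 := by
    rw [hP, map_prod]
    have hfac : ∀ i : Fin n, MvPolynomial.eval (fun j => (d j : ℂ))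
        (∑ j : Fin s, MvPolynomial.C (ω j (x i)) * MvPolynomial.X j) =
        (r : ℂ) * (if x i ∈ L then 1 else 0) := by
      intro i
      rw [map_sum]
      have : ∀ j : Fin s, MvPolynomial.eval (fun j' => (d j' : ℂ))
          (MvPolynomial.C (ω j (x i)) * MvPolynomial.X j) = (d j : ℂ) * ω j (x i) := by
        intro j
        simp [mul_comm]
      rw [Finset.sum_congr rfl fun j _ => this j]
      exact base_complete s ω hzsf hinj hcomplete d hd r hr (x i)
    rw [Finset.prod_congr rfl fun i _ => hfac i]
    by_cases hall : ∀ i, x i ∈ L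
    · rw [if_pos hall]
      rw [Finset.prod_congr rfl (fun i _ => by rw [if_pos (hall i), mul_one]),
        Finset.prod_const, Finset.card_univ, Fintype.card_fin]
    · rw [if_neg hall]
      push_neg at hall
      obtain ⟨i, hi⟩ := hall
      exact Finset.prod_eq_zero (Finset.mem_univ i) (by rw [if_neg hi, mul_zero])
  -- expand eval as a sum over the antidiagonal
  set A : Finset ((Fin s) →₀ ℕ) :=
    (Finset.Nat.antidiagonalTuple s n).map
      (Finsupp.equivFunOnFinite.symm.toEmbedding) with hA
  have hmemA : ∀ m : (Fin s) →₀ ℕ, m ∈ A ↔ ∑ j, m j = n := by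
    intro m
    rw [hA, Finset.mem_map]
    constructor
    · rintro ⟨k, hk, rfl⟩
      rw [Finset.Nat.mem_antidiagonalTuple] at hk
      simpa using hk
    · intro hm
      refine ⟨Finsupp.equivFunOnFinite m, ?_, by simp⟩
      rw [Finset.Nat.mem_antidiagonalTuple]
      simpa using hm
  have hdeg : ∀ m : (Fin s) →₀ ℕ, m.degree = ∑ j, m j := by
    intro m
    rw [Finsupp.degree]
    exact Finset.sum_subset (Finset.subset_univ _)
      (fun j _ hj => Finsupp.notMem_support_iff.mp hj)
  have hsub : P.support ⊆ A := by
    intro m hm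
    rw [hmemA, ← hdeg]
    by_contra hne
    exact (MvPolynomial.mem_support_iff.mp hm) (hhom.coeff_eq_zero hne)
  have heval2 : MvPolynomial.eval (fun j => (d j : ℂ)) P =
      ∑ m ∈ A, MvPolynomial.coeff m P * ∏ j : Fin s, (d j : ℂ) ^ m j := by
    rw [MvPolynomial.eval_eq']
    exact Finset.sum_subset hsub (fun m _ hm => by
      rw [MvPolynomial.notMem_support_iff.mp hm, zero_mul])
  rw [hA, Finset.sum_map] at heval2
  have heval3 : MvPolynomial.eval (fun j => (d j : ℂ)) P =
      ∑ k ∈ Finset.Nat.antidiagonalTuple s n,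
        ((Nat.multinomial Finset.univ k : ℂ) * Ω k x) * ∏ j : Fin s, (d j : ℂ) ^ k j := by
    rw [heval2]
    refine Finset.sum_congr rfl fun k hk => ?_
    rw [Finset.Nat.mem_antidiagonalTuple] at hk
    rw [show MvPolynomial.coeff (Finsupp.equivFunOnFinite.symm.toEmbedding k) P
        = (Nat.multinomial Finset.univ k : ℂ) * Ω k x from hGen x k hk]
    simp
  rw [← heval, heval3]
  exact Finset.sum_congr rfl fun k _ => by ring
end Delta

section StepLemmas
variable {K : Type} [Group K] [Fintype K] {L : Subgroup K} {x₀ : K}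

lemma dcoset_bi {a h h' : K} (hh : h ∈ L) (hh' : h' ∈ L) :
    h * a * h' ∈ dcoset K L x₀ ↔ a ∈ dcoset K L x₀ := by
  constructor
  · rintro ⟨u, hu, v, hv, huv⟩
    refine ⟨h⁻¹ * u, L.mul_mem (L.inv_mem hh) hu, v * h'⁻¹, L.mul_mem hv (L.inv_mem hh'), ?_⟩
    have : a = h⁻¹ * (h * a * h') * h'⁻¹ := by group
    rw [this, huv]
    group
  · rintro ⟨u, hu, v, hv, huv⟩
    exact ⟨h * u, L.mul_mem hh hu, v * h', L.mul_mem hv hh', by rw [huv]; group⟩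

lemma dc_iff (x y : K) :
    ((QuotientGroup.mk x : K ⧸ L).out⁻¹ * (QuotientGroup.mk y : K ⧸ L).out ∈ dcoset K L x₀)
      ↔ x⁻¹ * y ∈ dcoset K L x₀ := by
  obtain ⟨l₁, hx⟩ := QuotientGroup.mk_out_eq_mul L x
  obtain ⟨l₂, hy⟩ := QuotientGroup.mk_out_eq_mul L y
  rw [hx, hy]
  have he : (x * (l₁ : K))⁻¹ * (y * (l₂ : K)) = (l₁ : K)⁻¹ * (x⁻¹ * y) * (l₂ : K) := by group
  rw [he]
  exact dcoset_bi (L.inv_mem l₁.2) l₂.2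

lemma step_translate (n m : ℕ) (p : ℝ) (u x y : Fin n → K) :
    step K L x₀ n m p (fun i => QuotientGroup.mk (u i * x i)) (fun i => QuotientGroup.mk (u i * y i))
      = step K L x₀ n m p (fun i => QuotientGroup.mk (x i)) (fun i => QuotientGroup.mk (y i)) := by
  have hcomp : ∀ i, ((QuotientGroup.mk (u i * x i) : K ⧸ L) = QuotientGroup.mk (u i * y i))
      ↔ ((QuotientGroup.mk (x i) : K ⧸ L) = QuotientGroup.mk (y i)) := by
    intro i
    rw [QuotientGroup.eq, QuotientGroup.eq]
    have : (u i * x i)⁻¹ * (u i * y i) = (x i)⁻¹ * y i := by group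
    rw [this]
  have hdc : ∀ j, ((((QuotientGroup.mk (u j * x j) : K ⧸ L)).out⁻¹ *
        ((QuotientGroup.mk (u j * y j) : K ⧸ L)).out ∈ dcoset K L x₀)
      ↔ (((QuotientGroup.mk (x j) : K ⧸ L)).out⁻¹ *
        ((QuotientGroup.mk (y j) : K ⧸ L)).out ∈ dcoset K L x₀)) := by
    intro j
    rw [dc_iff, dc_iff]
    have : (u j * x j)⁻¹ * (u j * y j) = (x j)⁻¹ * y j := by group
    rw [this]
  unfold step
  refine if_congr ?_ rfl (if_congr ?_ rfl rfl)
  · rw [funext_iff, funext_iff]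
    exact forall_congr' hcomp
  · refine exists_congr fun j => and_congr (forall_congr' fun i =>
      imp_congr Iff.rfl (hcomp i)) (hdc j)

lemma step_perm (n m : ℕ) (p : ℝ) (τ : Equiv.Perm (Fin n)) (y : Fin n → K) :
    step K L x₀ n m p (eQ K L n) (fun i => QuotientGroup.mk (y (τ i)))
      = step K L x₀ n m p (eQ K L n) (fun i => QuotientGroup.mk (y i)) := by
  unfold step eQ
  refine if_congr ?_ rfl (if_congr ?_ rfl rfl)
  · rw [funext_iff, funext_iff]
    exact τ.forall_congr (fun i => Iff.rfl)
  · refine τ.exists_congr fun j => ?_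
    refine and_congr ?_ ?_
    · constructor
      · intro hf i hi
        have := hf (τ.symm i) (fun h => hi (by rw [← h]; simp))
        simpa using this
      · intro hf i hi
        exact hf (τ i) (fun h => hi (τ.injective (by simpa using h)))
    · exact Iff.rfl

-- fiber counting
noncomputable def cosetFiberEquiv (c : K ⧸ L) : {z : K // QuotientGroup.mk z = c} ≃ L where
  toFun z := ⟨c.out⁻¹ * z.1, by
    have h1 : (QuotientGroup.mk c.out : K ⧸ L) = QuotientGroup.mk z.1 :=
      (QuotientGroup.out_eq' c).trans z.2.symm
    exact QuotientGroup.eq.mp h1⟩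
  invFun l := ⟨c.out * (l : K), by
    rw [QuotientGroup.mk_mul_of_mem _ l.2, QuotientGroup.out_eq']⟩
  left_inv z := by
    ext
    simp
  right_inv l := by
    ext
    simp

lemma fiber_card (n : ℕ) (q : Fin n → K ⧸ L) :
    Fintype.card {y : Fin n → K // (fun i => (QuotientGroup.mk (y i) : K ⧸ L)) = q}
      = Fintype.card L ^ n := by
  have e1 : {y : Fin n → K // (fun i => (QuotientGroup.mk (y i) : K ⧸ L)) = q}
      ≃ ∀ i : Fin n, {z : K // (QuotientGroup.mk z : K ⧸ L) = q i} :=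
    (Equiv.subtypeEquivRight (fun y => funext_iff)).trans (Equiv.subtypePiEquivPi (p := fun i (z : K) => (QuotientGroup.mk z : K ⧸ L) = q i))
  rw [Fintype.card_congr e1, Fintype.card_pi]
  rw [Finset.prod_congr rfl fun i _ => Fintype.card_congr (cosetFiberEquiv (q i))]
  rw [Finset.prod_const, Finset.card_univ, Fintype.card_fin]

lemma fiber_sum (n : ℕ) (F : (Fin n → K ⧸ L) → ℂ) :
    ∑ y : Fin n → K, F (fun i => QuotientGroup.mk (y i))
      = (Fintype.card L : ℂ) ^ n * ∑ q : Fin n → K ⧸ L, F q := by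
  classical
  rw [← Fintype.sum_fiberwise' (fun y : Fin n → K => (fun i => (QuotientGroup.mk (y i) : K ⧸ L))) F]
  rw [Finset.mul_sum]
  refine Finset.sum_congr rfl fun q _ => ?_
  rw [Finset.sum_const, Finset.card_univ, fiber_card n q, nsmul_eq_mul]
  push_cast
  ring
end StepLemmas

section WreathLemmas
variable {K : Type} [Group K] [Fintype K] {L : Subgroup K} {n : ℕ}

lemma permAut_apply (σ : Equiv.Perm (Fin n)) (f : Fin n → K) (i : Fin n) :
    (permAut n K σ) f i = f (σ⁻¹ i) := rfl

lemma mem_wsub (lam : Fin n → K) (σ : Equiv.Perm (Fin n)) (hlam : ∀ i, lam i ∈ L) :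
    (⟨lam, σ⟩ : Wreath n K) ∈ wreathSubgroup n K L := fun i => hlam i

lemma wmul_left (a b : Wreath n K) : (a * b).left = a.left * (permAut n K a.right) b.left :=
  SemidirectProduct.mul_left a b

lemma wpair_mul (x y : Fin n → K) (σ τ : Equiv.Perm (Fin n)) :
    (⟨x, σ⟩ * ⟨y, τ⟩ : Wreath n K) = ⟨fun i => x i * y (σ⁻¹ i), σ * τ⟩ := by
  ext i
  · rw [wmul_left]
    rfl
  · rfl

lemma wpair_inv (y : Fin n → K) (σ : Equiv.Perm (Fin n)) :
    (⟨y, σ⟩ : Wreath n K)⁻¹ = ⟨fun i => (y (σ i))⁻¹, σ⁻¹⟩ := by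
  rw [inv_eq_iff_mul_eq_one, wpair_mul]
  ext i
  · simp
  · simp
end WreathLemmas

section OmegaInv
variable {K : Type} [Group K] [Fintype K] {L : Subgroup K} {n : ℕ}
variable {Om : (Fin n → K) → ℂ}

lemma omega_right_inv (hΦ : IsZSF (Wreath n K) (wreathSubgroup n K L) (fun w => Om w.left))
    (x lam : Fin n → K) (hlam : ∀ i, lam i ∈ L) :
    Om (fun i => x i * lam i) = Om x := by
  have h := hΦ.2.1 (⟨x, 1⟩ : Wreath n K) 1 (wreathSubgroup n K L).one_mem
    ⟨lam, 1⟩ (mem_wsub lam 1 hlam)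
  rw [one_mul, wpair_mul] at h
  simpa using h

lemma omega_perm_inv (hΦ : IsZSF (Wreath n K) (wreathSubgroup n K L) (fun w => Om w.left))
    (x : Fin n → K) (σ : Equiv.Perm (Fin n)) :
    Om (fun i => x (σ i)) = Om x := by
  have h := hΦ.2.1 (⟨x, 1⟩ : Wreath n K) ⟨1, σ⁻¹⟩ (mem_wsub 1 σ⁻¹ (fun i => L.one_mem))
    ⟨1, σ⟩ (mem_wsub 1 σ (fun i => L.one_mem))
  rw [wpair_mul, wpair_mul] at h
  simpa using h

lemma omega_unitary (hΦ : IsZSF (Wreath n K) (wreathSubgroup n K L) (fun w => Om w.left))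
    (w : Wreath n K) :
    (starRingEnd ℂ) (Om w.left) = Om (w⁻¹).left := by
  have h := zsf_unitary hΦ w⁻¹
  rw [inv_inv] at h
  exact h
end OmegaInv

section Eigen
variable {K : Type} [Group K] [Fintype K] {L : Subgroup K}

lemma eigen_step (x₀ : K) (n m : ℕ) (p : ℝ) {Om : (Fin n → K) → ℂ}
    (hΦ : IsZSF (Wreath n K) (wreathSubgroup n K L) (fun w => Om w.left))
    (g : Fin n → K) :
    ∑ q : Fin n → K ⧸ L, Om (fun i => (q i).out) *
        ((step K L x₀ n m p q (fun i => QuotientGroup.mk (g i)) : ℝ) : ℂ)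
      = (∑ w : Wreath n K,
          ((step K L x₀ n m p (eQ K L n) (fun i => ((w.left i : K) : K ⧸ L)) : ℂ) /
            ((Nat.card L : ℂ) ^ n * (n.factorial : ℂ))) * (starRingEnd ℂ) (Om w.left)) *
        Om g := by
  classical
  set cL : ℂ := (Fintype.card L : ℂ) with hcLdef
  have hcL : cL ≠ 0 := by
    rw [hcLdef]
    exact_mod_cast Nat.cast_ne_zero.mpr Fintype.card_ne_zero
  have hfact : ((n.factorial : ℂ)) ≠ 0 := by
    exact_mod_cast Nat.cast_ne_zero.mpr (Nat.factorial_ne_zero n)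
  set C : (Fin n → K) → ℂ :=
    fun y => ((step K L x₀ n m p (eQ K L n) (fun i => QuotientGroup.mk (y i)) : ℝ) : ℂ) with hC
  set T : ℂ := ∑ q : Fin n → K ⧸ L, Om (fun i => (q i).out) *
    ((step K L x₀ n m p q (fun i => QuotientGroup.mk (g i)) : ℝ) : ℂ) with hT
  -- Step 1: unfold the quotient sum to a sum over K^n
  have step1 : cL ^ n * T = ∑ y : Fin n → K, Om y *
      ((step K L x₀ n m p (fun i => QuotientGroup.mk (y i))
        (fun i => QuotientGroup.mk (g i)) : ℝ) : ℂ) := by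
    rw [hT, ← fiber_sum n (fun q => Om (fun i => (q i).out) *
      ((step K L x₀ n m p q (fun i => QuotientGroup.mk (g i)) : ℝ) : ℂ))]
    refine (Finset.sum_congr rfl fun y _ => ?_).symm
    congr 1
    choose l hl using fun i => QuotientGroup.mk_out_eq_mul L (y i)
    have hout : (fun i => ((QuotientGroup.mk (y i) : K ⧸ L)).out) =
        fun i => y i * (l i : K) := funext hl
    rw [hout]
    exact (omega_right_inv hΦ y (fun i => (l i : K)) (fun i => (l i).2)).symm
  -- Step 2: translate
  have step2 : ∀ y : Fin n → K,
      step K L x₀ n m p (fun i => QuotientGroup.mk (y i)) (fun i => QuotientGroup.mk (g i))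
        = step K L x₀ n m p (eQ K L n) (fun i => QuotientGroup.mk ((y i)⁻¹ * g i)) := by
    intro y
    have h := step_translate (L := L) (x₀ := x₀) n m p y (fun _ => (1 : K))
      (fun i => (y i)⁻¹ * g i)
    have e1 : (fun i => QuotientGroup.mk (y i * (1 : K)) : Fin n → K ⧸ L)
        = fun i => QuotientGroup.mk (y i) := by funext i; rw [mul_one]
    have e2 : (fun i => QuotientGroup.mk (y i * ((y i)⁻¹ * g i)) : Fin n → K ⧸ L)
        = fun i => QuotientGroup.mk (g i) := by
      funext i; congr 1; group
    have e3 : (fun i => QuotientGroup.mk ((1 : K)) : Fin n → K ⧸ L) = eQ K L n := rfl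
    rw [e1, e2, e3] at h
    exact h
  -- Step 3: change variables y ↦ g * y⁻¹
  have step3 : ∑ y : Fin n → K, Om y * C (fun i => (y i)⁻¹ * g i)
      = ∑ y : Fin n → K, Om (fun i => g i * (y i)⁻¹) * C y := by
    rw [← Equiv.sum_comp
      (⟨fun y i => g i * (y i)⁻¹, fun z i => (z i)⁻¹ * g i,
        fun y => by funext i; simp, fun z => by funext i; simp⟩ :
          (Fin n → K) ≃ (Fin n → K)) (fun z => Om z * C (fun i => (z i)⁻¹ * g i))]
    refine Finset.sum_congr rfl fun y _ => ?_
    simp only [Equiv.coe_fn_mk]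
    rw [show (fun i => (g i * (y i)⁻¹)⁻¹ * g i) = y from by funext i; group]
  -- Step 4: average over permutations
  have step4 : ∀ σ : Equiv.Perm (Fin n),
      ∑ y : Fin n → K, Om (fun i => g i * (y (σ i))⁻¹) * C y
        = ∑ y : Fin n → K, Om (fun i => g i * (y i)⁻¹) * C y := by
    intro σ
    rw [← Equiv.sum_comp (Equiv.arrowCongr σ (Equiv.refl K))
      (fun y => Om (fun i => g i * (y (σ i))⁻¹) * C y)]
    refine Finset.sum_congr rfl fun y _ => ?_
    have e1 : (fun i => g i * (((Equiv.arrowCongr σ (Equiv.refl K)) y) (σ i))⁻¹)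
        = fun i => g i * (y i)⁻¹ := by
      funext i
      simp [Equiv.arrowCongr]
    rw [e1]
    congr 1
    show ((step K L x₀ n m p (eQ K L n)
        (fun i => QuotientGroup.mk (y (σ.symm i))) : ℝ) : ℂ)
      = ((step K L x₀ n m p (eQ K L n) (fun i => QuotientGroup.mk (y i)) : ℝ) : ℂ)
    exact congrArg (fun t : ℝ => (t : ℂ)) (step_perm n m p σ.symm y)
  -- assemble: cL^n * T = ∑_y Om (g y⁻¹) * C y
  have hS3 : cL ^ n * T = ∑ y : Fin n → K, Om (fun i => g i * (y i)⁻¹) * C y := by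
    rw [step1, ← step3]
    refine Finset.sum_congr rfl fun y _ => ?_
    rw [step2 y]
  -- the wreath-group sum
  set gh : Wreath n K := ⟨g, (1 : Equiv.Perm (Fin n))⟩ with hgh
  set Cw : Wreath n K → ℂ := fun w => C w.left with hCw
  set U : ℂ := ∑ w : Wreath n K, Om ((gh * w⁻¹).left) * Cw w with hU
  have step5 : U = (n.factorial : ℂ) * (cL ^ n * T) := by
    have hWe : U = ∑ q : (Fin n → K) × Equiv.Perm (Fin n),
        Om ((gh * (⟨q.1, q.2⟩ : Wreath n K)⁻¹).left) * C q.1 := by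
      rw [hU, ← Equiv.sum_comp
        ({ toFun := fun q : (Fin n → K) × Equiv.Perm (Fin n) => (⟨q.1, q.2⟩ : Wreath n K)
           invFun := fun w => (w.left, w.right)
           left_inv := fun _ => rfl
           right_inv := fun _ => rfl } :
          ((Fin n → K) × Equiv.Perm (Fin n)) ≃ Wreath n K)
        (fun w => Om ((gh * w⁻¹).left) * Cw w)]
      exact Finset.sum_congr rfl fun q _ => rfl
    rw [hWe, Fintype.sum_prod_type_right]
    have hterm : ∀ (σ : Equiv.Perm (Fin n)) (y : Fin n → K),
        Om ((gh * (⟨y, σ⟩ : Wreath n K)⁻¹).left) = Om (fun i => g i * (y (σ i))⁻¹) := by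
      intro σ y
      rw [wpair_inv, hgh, wpair_mul]
      congr 1
    calc ∑ σ : Equiv.Perm (Fin n), ∑ y : Fin n → K,
          Om ((gh * (⟨y, σ⟩ : Wreath n K)⁻¹).left) * C y
        = ∑ σ : Equiv.Perm (Fin n), ∑ y : Fin n → K,
            Om (fun i => g i * (y (σ i))⁻¹) * C y := by
          refine Finset.sum_congr rfl fun σ _ => Finset.sum_congr rfl fun y _ => ?_
          rw [hterm σ y]
      _ = ∑ _σ : Equiv.Perm (Fin n), ∑ y : Fin n → K,
            Om (fun i => g i * (y i)⁻¹) * C y := by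
          exact Finset.sum_congr rfl fun σ _ => step4 σ
      _ = (n.factorial : ℂ) * (cL ^ n * T) := by
          rw [Finset.sum_const, Finset.card_univ, Fintype.card_perm, Fintype.card_fin,
            nsmul_eq_mul, hS3]
  -- right invariance of the weight
  have hν : ∀ (w : Wreath n K) (h : wreathSubgroup n K L), Cw (w * (h : Wreath n K)) = Cw w := by
    intro w h
    rw [hCw]
    have harg : (fun i => (QuotientGroup.mk ((w * (h : Wreath n K)).left i) : K ⧸ L))
        = fun i => QuotientGroup.mk (w.left i) := by
      funext i
      rw [wmul_left, Pi.mul_apply, permAut_apply]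
      exact QuotientGroup.mk_mul_of_mem _ (h.2 (w.right⁻¹ i))
    show ((step K L x₀ n m p (eQ K L n)
      (fun i => QuotientGroup.mk ((w * (h : Wreath n K)).left i)) : ℝ) : ℂ) = _
    rw [harg]
  have hUh : ∀ h : wreathSubgroup n K L,
      U = ∑ w : Wreath n K, Om ((gh * (h : Wreath n K) * w⁻¹).left) * Cw w := by
    intro h
    rw [hU, ← Equiv.sum_comp (Equiv.mulRight (h : Wreath n K))
      (fun w => Om ((gh * (h : Wreath n K) * w⁻¹).left) * Cw w)]
    refine Finset.sum_congr rfl fun w _ => ?_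
    simp only [Equiv.coe_mulRight]
    rw [show gh * (h : Wreath n K) * (w * (h : Wreath n K))⁻¹ = gh * w⁻¹ by group, hν w h]
  have step7 : U = (∑ w : Wreath n K, Cw w * (starRingEnd ℂ) (Om w.left)) * Om g := by
    calc U = (Fintype.card (wreathSubgroup n K L) : ℂ)⁻¹ *
          ∑ _h : wreathSubgroup n K L, U := (avg_const _ U).symm
      _ = (Fintype.card (wreathSubgroup n K L) : ℂ)⁻¹ *
          ∑ h : wreathSubgroup n K L, ∑ w : Wreath n K,
            Om ((gh * (h : Wreath n K) * w⁻¹).left) * Cw w := by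
          congr 1
          exact Finset.sum_congr rfl fun h _ => hUh h
      _ = ∑ w : Wreath n K, Cw w * ((Fintype.card (wreathSubgroup n K L) : ℂ)⁻¹ *
            ∑ h : wreathSubgroup n K L, Om ((gh * (h : Wreath n K) * w⁻¹).left)) := by
          rw [Finset.sum_comm, Finset.mul_sum]
          refine Finset.sum_congr rfl fun w _ => ?_
          simp only [Finset.mul_sum]
          exact Finset.sum_congr rfl fun h _ => by ring
      _ = ∑ w : Wreath n K, Cw w * (Om gh.left * Om (w⁻¹).left) := by
          refine Finset.sum_congr rfl fun w _ => ?_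
          rw [hΦ.2.2 gh w⁻¹]
      _ = ∑ w : Wreath n K, (Cw w * (starRingEnd ℂ) (Om w.left)) * Om g := by
          refine Finset.sum_congr rfl fun w _ => ?_
          rw [omega_unitary hΦ w]
          rw [show (gh.left : Fin n → K) = g from rfl]
          ring
      _ = (∑ w : Wreath n K, Cw w * (starRingEnd ℂ) (Om w.left)) * Om g := by
          rw [Finset.sum_mul]
  -- final assembly
  have hX : ((Nat.card L : ℂ) ^ n * (n.factorial : ℂ)) = cL ^ n * (n.factorial : ℂ) := by
    rw [Nat.card_eq_fintype_card]
  have hV : (∑ w : Wreath n K,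
      ((step K L x₀ n m p (eQ K L n) (fun i => ((w.left i : K) : K ⧸ L)) : ℂ) /
        ((Nat.card L : ℂ) ^ n * (n.factorial : ℂ))) * (starRingEnd ℂ) (Om w.left))
      = (∑ w : Wreath n K, Cw w * (starRingEnd ℂ) (Om w.left)) /
          (cL ^ n * (n.factorial : ℂ)) := by
    rw [Finset.sum_div]
    refine Finset.sum_congr rfl fun w _ => ?_
    rw [hX, show ((step K L x₀ n m p (eQ K L n)
      (fun i => ((w.left i : K) : K ⧸ L)) : ℂ)) = Cw w from rfl]
    ring
  rw [hV, div_mul_eq_mul_div, eq_div_iff (mul_ne_zero (pow_ne_zero n hcL) hfact),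
    ← step7, step5]
  ring
end Eigen

theorem n_step_probability_formula'
    (K : Type) [Group K] [Fintype K] (L : Subgroup K)
    (s : ℕ) [NeZero s]
    (ω : Fin s → K → ℂ)
    (hzsf : ∀ i, IsZSF K L (ω i))
    (hinj : Function.Injective ω)
    (hcomplete : s = Nat.card (DoubleCoset.Quotient (L : Set K) (L : Set K)))
    (x₀ : K)
    (m : ℕ)
    (p : ℝ)
    (r : ℕ) (hr : r * Nat.card L = Nat.card K)
    (d : Fin s → ℕ)
    (hd : ∀ i, (Fintype.card K : ℂ)⁻¹ *
      ∑ g : K, ω i g * (starRingEnd ℂ) (ω i g) = ((d i : ℂ))⁻¹)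
    (n : ℕ)
    (Ω : (Fin s → ℕ) → (Fin n → K) → ℂ)
    (hGen : GenId K s n ω Ω)
    (hΩ : ∀ k : Fin s → ℕ, (∑ i, k i = n) →
      IsZSF (Wreath n K) (wreathSubgroup n K L) (fun w => Ω k w.left))
    (f : (Fin s → ℕ) → ℂ)
    (hf : ∀ k : Fin s → ℕ, f k = ∑ w : Wreath n K,
        ((step K L x₀ n m p (eQ K L n) (fun i => ((w.left i : K) : K ⧸ L)) : ℂ) /
            ((Nat.card L : ℂ) ^ n * (n.factorial : ℂ))) *
          (starRingEnd ℂ) (Ω k w.left))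
    (N : ℕ) (g : Fin n → K) :
    (PmatC K L x₀ n m p ^ N) (eQ K L n) (fun i => ((g i : K) : K ⧸ L)) =
      ((r : ℂ) ^ n)⁻¹ *
        ∑ k ∈ Finset.Nat.antidiagonalTuple s n,
          ((∏ i : Fin s, (d i : ℂ) ^ k i) * (Nat.multinomial Finset.univ k : ℂ)) *
            f k ^ N * Ω k g := by
  classical
  have hrne : ((r : ℂ)) ≠ 0 := by
    have hK : Nat.card K ≠ 0 := Nat.card_pos.ne'
    intro h0
    have : r = 0 := by exact_mod_cast h0
    rw [this, zero_mul] at hr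
    exact hK hr.symm
  induction N generalizing g with
  | zero =>
    rw [pow_zero, Matrix.one_apply]
    have hdelta := wreath_delta s ω hzsf hinj hcomplete d hd r hr n Ω hGen g
    have hcond : (eQ K L n = fun i => ((g i : K) : K ⧸ L)) ↔ ∀ i, g i ∈ L := by
      rw [funext_iff]
      refine forall_congr' fun i => ?_
      rw [show (eQ K L n i) = QuotientGroup.mk (1 : K) from rfl, QuotientGroup.eq]
      simp
    have hsum : ∑ k ∈ Finset.Nat.antidiagonalTuple s n,
        ((∏ i : Fin s, (d i : ℂ) ^ k i) * (Nat.multinomial Finset.univ k : ℂ)) *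
          f k ^ 0 * Ω k g
        = if (∀ i, g i ∈ L) then ((r : ℂ)) ^ n else 0 := by
      rw [← hdelta]
      refine Finset.sum_congr rfl fun k _ => by rw [pow_zero, mul_one]
    rw [hsum]
    by_cases hall : ∀ i, g i ∈ L
    · rw [if_pos (hcond.mpr hall), if_pos hall, inv_mul_cancel₀ (pow_ne_zero n hrne)]
    · rw [if_neg (fun h => hall (hcond.mp h)), if_neg hall, mul_zero]
  | succ N ih =>
    rw [pow_succ, Matrix.mul_apply]
    have hstep : ∀ q : Fin n → K ⧸ L,
        (PmatC K L x₀ n m p ^ N) (eQ K L n) q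
          = ((r : ℂ) ^ n)⁻¹ *
            ∑ k ∈ Finset.Nat.antidiagonalTuple s n,
              ((∏ i : Fin s, (d i : ℂ) ^ k i) * (Nat.multinomial Finset.univ k : ℂ)) *
                f k ^ N * Ω k (fun i => (q i).out) := by
      intro q
      have hq : (fun i => (((fun i' => (q i').out) i : K) : K ⧸ L)) = q := by
        funext i
        exact QuotientGroup.out_eq' (q i)
      have := ih (fun i => (q i).out)
      rw [hq] at this
      exact this
    have hPapp : ∀ q : Fin n → K ⧸ L,
        PmatC K L x₀ n m p q (fun i => ((g i : K) : K ⧸ L))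
          = ((step K L x₀ n m p q (fun i => QuotientGroup.mk (g i)) : ℝ) : ℂ) := fun q => rfl
    calc ∑ q : Fin n → K ⧸ L, (PmatC K L x₀ n m p ^ N) (eQ K L n) q *
            PmatC K L x₀ n m p q (fun i => ((g i : K) : K ⧸ L))
        = ((r : ℂ) ^ n)⁻¹ * ∑ k ∈ Finset.Nat.antidiagonalTuple s n,
            ((∏ i : Fin s, (d i : ℂ) ^ k i) * (Nat.multinomial Finset.univ k : ℂ)) * f k ^ N *
            ∑ q : Fin n → K ⧸ L, Ω k (fun i => (q i).out) *
              ((step K L x₀ n m p q (fun i => QuotientGroup.mk (g i)) : ℝ) : ℂ) := by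
          trans (∑ q : Fin n → K ⧸ L, ∑ k ∈ Finset.Nat.antidiagonalTuple s n,
            ((r : ℂ) ^ n)⁻¹ * (((∏ i : Fin s, (d i : ℂ) ^ k i) *
              (Nat.multinomial Finset.univ k : ℂ)) * f k ^ N *
              (Ω k (fun i => (q i).out) *
                ((step K L x₀ n m p q (fun i => QuotientGroup.mk (g i)) : ℝ) : ℂ))))
          · refine Finset.sum_congr rfl fun q _ => ?_
            rw [hstep q, hPapp q, Finset.mul_sum, Finset.sum_mul]
            refine Finset.sum_congr rfl fun k _ => by ring
          · rw [Finset.sum_comm, Finset.mul_sum]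
            refine Finset.sum_congr rfl fun k _ => ?_
            rw [← Finset.mul_sum]
            congr 1
            rw [← Finset.mul_sum]
      _ = ((r : ℂ) ^ n)⁻¹ *
          ∑ k ∈ Finset.Nat.antidiagonalTuple s n,
            ((∏ i : Fin s, (d i : ℂ) ^ k i) * (Nat.multinomial Finset.univ k : ℂ)) *
              f k ^ (N + 1) * Ω k g := by
          congr 1
          refine Finset.sum_congr rfl fun k hk => ?_
          rw [eigen_step x₀ n m p (hΩ k (Finset.Nat.mem_antidiagonalTuple.mp hk)) g, ← hf k]
          ring

/-- The `N`-step probability of the urn model: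
`ν_N(ḡ) = r^{-n} ∑_{k ∈ X(s,n)} d_k f(k)^N Ω_k(g)`, where
`d_k = d_0^{k_0} ⋯ d_{s-1}^{k_{s-1}} (n choose k)` and `f(k)` is the Fourier coefficient
`∑_w ν̃(w) conj(Ω_k(w))` of the step distribution. -/
theorem n_step_probability_formula
    (K : Type) [Group K] [Fintype K] (L : Subgroup K)
    (hGP : IsGelfandPair K L)
    (s : ℕ) [NeZero s] (hs : 2 ≤ s)
    (ω : Fin s → K → ℂ)
    (hzsf : ∀ i, IsZSF K L (ω i))
    (hω0 : ∀ g : K, ω 0 g = 1)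
    (hinj : Function.Injective ω)
    (hcomplete : s = Nat.card (DoubleCoset.Quotient (L : Set K) (L : Set K)))
    (x₀ : K) (hx₀ : x₀ ∉ L)
    (m : ℕ) (hm : m * Nat.card L = Nat.card (dcoset K L x₀))
    (p : ℝ) (hp0 : 0 < m * p) (hp1 : m * p ≤ 1)
    (r : ℕ) (hr : r * Nat.card L = Nat.card K)
    (d : Fin s → ℕ)
    (hd : ∀ i, (Fintype.card K : ℂ)⁻¹ *
      ∑ g : K, ω i g * (starRingEnd ℂ) (ω i g) = ((d i : ℂ))⁻¹)
    (n : ℕ) (hn : 0 < n)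
    (Ω : (Fin s → ℕ) → (Fin n → K) → ℂ)
    (hGen : GenId K s n ω Ω)
    (hΩ : ∀ k : Fin s → ℕ, (∑ i, k i = n) →
      IsZSF (Wreath n K) (wreathSubgroup n K L) (fun w => Ω k w.left))
    (f : (Fin s → ℕ) → ℂ)
    (hf : ∀ k : Fin s → ℕ, f k = ∑ w : Wreath n K,
        ((step K L x₀ n m p (eQ K L n) (fun i => ((w.left i : K) : K ⧸ L)) : ℂ) /
            ((Nat.card L : ℂ) ^ n * (n.factorial : ℂ))) *
          (starRingEnd ℂ) (Ω k w.left))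
    (N : ℕ) (g : Fin n → K) :
    (PmatC K L x₀ n m p ^ N) (eQ K L n) (fun i => ((g i : K) : K ⧸ L)) =
      ((r : ℂ) ^ n)⁻¹ *
        ∑ k ∈ Finset.Nat.antidiagonalTuple s n,
          ((∏ i : Fin s, (d i : ℂ) ^ k i) * (Nat.multinomial Finset.univ k : ℂ)) *
            f k ^ N * Ω k g :=
  n_step_probability_formula' K L s ω hzsf hinj hcomplete x₀ m p r hr d hd n Ω hGen hΩ f hf N g
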